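/- Let H_δ = {z ∈ ℂ : Re z > 1/(2kδ)} and let φ : H_δ → H_δ be holomorphic of the form φ(z) = z + 1 + b/z + R(z) with |R(z)| ≤ C₀/|z|² on H_δ, and suppose Re φ^{∘j}(z) > Re z + j/2 for all z ∈ H_δ and j ∈ ℕ. Assume moreover |dφ/dz(z) − 1| = |T(z)| ≤ C₁/|z|² for a constant C₁. Then for every ε > 0 there exists n₁ ∈ ℕ such that for every z₁ ∈ H_δ with Re z₁ ≥ n₁/2 and every j ∈ ℕ, |d(φ^{∘j})/dz (z₁) − 1| < ε. -/

import Mathlib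

set_option maxHeartbeats 1000000


open Filter Topology

/-- derivative estimate for the iterates of an almost-translation
`φ(z) = z + 1 + b/z + R(z)` on a half-plane `H_δ`. -/
theorem iterates_derivative_close_to_one
    (k : ℕ) (hk : 1 ≤ k) (δ : ℝ) (hδ : 0 < δ)
    (H : Set ℂ) (hH : H = {z : ℂ | 1 / (2 * k * δ) < z.re})
    (φ R : ℂ → ℂ) (b : ℂ) (C₀ C₁ : ℝ)
    (hmaps : Set.MapsTo φ H H)
    (hhol : DifferentiableOn ℂ φ H)
    (hform : ∀ z ∈ H, φ z = z + 1 + b / z + R z)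
    (hR : ∀ z ∈ H, ‖R z‖ ≤ C₀ / ‖z‖ ^ 2)
    (hre : ∀ z ∈ H, ∀ j : ℕ, 1 ≤ j → z.re + (j : ℝ) / 2 < ((φ^[j]) z).re)
    (hT : ∀ z ∈ H, ‖deriv φ z - 1‖ ≤ C₁ / ‖z‖ ^ 2) :
    ∀ ε > (0 : ℝ), ∃ n₁ : ℕ, ∀ z₁ ∈ H, (n₁ : ℝ) / 2 ≤ z₁.re →
      ∀ j : ℕ, ‖deriv (φ^[j]) z₁ - 1‖ < ε := by
  intro ε hε
  have hk' : (0:ℝ) < (k:ℝ) := by exact_mod_cast Nat.pos_of_ne_zero (by omega)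
  have hc0 : (0:ℝ) < 1 / (2 * k * δ) := by positivity
  -- H is open
  have hHopen : IsOpen H := by
    rw [hH]
    exact isOpen_lt continuous_const Complex.continuous_re
  -- C₁ is nonnegative
  have hC₁ : 0 ≤ C₁ := by
    set w : ℂ := ((1 / (2 * k * δ) + 1 : ℝ) : ℂ) with hw
    have hwH : w ∈ H := by
      rw [hH]
      simp only [Set.mem_setOf_eq, hw, Complex.ofReal_re]
      linarith
    have hwne : w ≠ 0 := by
      rw [hw]
      exact_mod_cast Complex.ofReal_ne_zero.mpr (by positivity)
    have hwpos : 0 < ‖w‖ ^ 2 := pow_pos (norm_pos_iff.mpr hwne) 2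
    have h1 : (0:ℝ) ≤ C₁ / ‖w‖ ^ 2 :=
      le_trans (norm_nonneg _) (hT w hwH)
    rcases div_nonneg_iff.mp h1 with h | h
    · exact h.1
    · linarith [h.2, hwpos]
  set M := min (ε / 2) 1 with hM
  have hM0 : 0 < M := lt_min (by linarith) one_pos
  refine ⟨⌈8 * C₁ / M⌉₊ + 2, ?_⟩
  intro z₁ hz₁ hrez j
  set n₁ : ℕ := ⌈8 * C₁ / M⌉₊ + 2 with hn₁
  set a : ℝ := (n₁ : ℝ) with ha
  have ha2 : (2:ℝ) ≤ a := by
    rw [ha, hn₁]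
    push_cast
    linarith [Nat.cast_nonneg (α := ℝ) ⌈8 * C₁ / M⌉₊]
  have ha1 : (1:ℝ) < a := by linarith
  have hbound : 8 * C₁ / (a - 1) ≤ M := by
    rw [div_le_iff₀ (by linarith)]
    have h1 : 8 * C₁ / M ≤ (⌈8 * C₁ / M⌉₊ : ℝ) := Nat.le_ceil _
    have h2 : ((⌈8 * C₁ / M⌉₊ : ℕ) : ℝ) + 1 ≤ a - 1 := by
      rw [ha, hn₁]; push_cast; linarith
    have h3 : 8 * C₁ ≤ M * ((⌈8 * C₁ / M⌉₊ : ℝ)) := by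
      rw [div_le_iff₀ hM0] at h1
      linarith
    nlinarith
  have hMε : M ≤ ε / 2 := by rw [hM]; exact min_le_left _ _
  have hM1 : M ≤ 1 := by rw [hM]; exact min_le_right _ _
  clear hn₁ hM
  clear_value n₁ M
  -- lower bound on the modulus of the iterates
  have hw : ∀ j : ℕ, φ^[j] z₁ ∈ H ∧ (a + j) / 2 ≤ ‖φ^[j] z₁‖ := by
    intro j
    have hmem : φ^[j] z₁ ∈ H := Set.MapsTo.iterate hmaps j hz₁
    refine ⟨hmem, ?_⟩
    have hre' : (a + j) / 2 ≤ (φ^[j] z₁).re := by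
      rcases Nat.eq_zero_or_pos j with h0 | h1
      · subst h0; simpa using hrez
      · have := hre z₁ hz₁ j h1
        have hz₁re : a / 2 ≤ z₁.re := hrez
        have : a / 2 + (j:ℝ)/2 < (φ^[j] z₁).re := by linarith
        linarith
    exact le_trans hre' (Complex.re_le_norm _)
  have hapos : ∀ j : ℕ, (0:ℝ) < (a + j) / 2 := by
    intro j
    have : (0:ℝ) ≤ (j:ℝ) := Nat.cast_nonneg j
    linarith
  -- key induction
  have key : ∀ j : ℕ, DifferentiableAt ℂ (φ^[j]) z₁ ∧
      ‖deriv (φ^[j]) z₁ - 1‖ ≤ 8 * C₁ * (1 / (a - 1) - 1 / (a + j - 1)) := by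
    intro j
    induction j with
    | zero =>
      constructor
      · simpa using differentiableAt_id
      · simp
    | succ j ih =>
      obtain ⟨hdiff, hest⟩ := ih
      obtain ⟨hmem, habs⟩ := hw j
      have hφdiff : DifferentiableAt ℂ φ (φ^[j] z₁) :=
        (hhol (φ^[j] z₁) hmem).differentiableAt (hHopen.mem_nhds hmem)
      have hdiff' : DifferentiableAt ℂ (φ^[j+1]) z₁ := by
        rw [Function.iterate_succ']
        exact DifferentiableAt.comp z₁ hφdiff hdiff
      refine ⟨hdiff', ?_⟩
      have hderiv : deriv (φ^[j+1]) z₁ = deriv φ (φ^[j] z₁) * deriv (φ^[j]) z₁ := by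
        rw [Function.iterate_succ']
        exact deriv_comp z₁ hφdiff hdiff
      set w := φ^[j] z₁ with hwdef
      set t := deriv φ w - 1 with htdef
      set D := deriv (φ^[j]) z₁ with hD
      have hwpos : 0 < ‖w‖ := lt_of_lt_of_le (hapos j) habs
      have ht : ‖t‖ ≤ 4 * C₁ / (a + j) ^ 2 := by
        refine le_trans (hT w hmem) ?_
        have h1 : ((a + j) / 2) ^ 2 ≤ ‖w‖ ^ 2 := by
          apply pow_le_pow_left₀ (le_of_lt (hapos j)) habs
        have h2 : C₁ / ‖w‖ ^ 2 ≤ C₁ / ((a + j) / 2) ^ 2 :=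
          div_le_div_of_nonneg_left hC₁ (by positivity) h1
        refine le_trans h2 (le_of_eq ?_)
        have hne : (a + (j:ℝ)) ≠ 0 := by
          have := hapos j; intro h; rw [h] at this; simp at this
        field_simp
        ring
      -- bound on |D - 1| ≤ 1
      have hBj : 8 * C₁ * (1 / (a - 1) - 1 / (a + j - 1)) ≤ 8 * C₁ / (a - 1) := by
        have hj1 : (0:ℝ) < a + j - 1 := by
          have : (0:ℝ) ≤ (j:ℝ) := Nat.cast_nonneg j
          linarith
        have : (0:ℝ) ≤ 1 / (a + j - 1) := by positivity
        have h8 : (0:ℝ) ≤ 8 * C₁ := by linarith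
        calc 8 * C₁ * (1 / (a - 1) - 1 / (a + j - 1))
            ≤ 8 * C₁ * (1 / (a - 1)) := by nlinarith
          _ = 8 * C₁ / (a - 1) := by ring
      have hD1 : ‖D - 1‖ ≤ 1 := by
        linarith [hest, hBj, hbound, hM1]
      have hDle : ‖D‖ ≤ 2 := by
        calc ‖D‖ = ‖(D - 1) + 1‖ := by ring_nf
          _ ≤ ‖D - 1‖ + ‖(1:ℂ)‖ := norm_add_le _ _
          _ ≤ 1 + 1 := by simp [hD1]
          _ = 2 := by norm_num
      have hexp : deriv (φ^[j+1]) z₁ - 1 = t * D + (D - 1) := by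
        rw [hderiv, htdef]; ring
      have hsplit : ‖deriv (φ^[j+1]) z₁ - 1‖
          ≤ ‖t‖ * ‖D‖ + ‖D - 1‖ := by
        rw [hexp]
        refine le_trans (norm_add_le _ _) ?_
        simp [map_mul]
      have hstep : ‖t‖ * ‖D‖ + ‖D - 1‖
          ≤ 8 * C₁ / (a + j) ^ 2 + 8 * C₁ * (1 / (a - 1) - 1 / (a + j - 1)) := by
        have h1 : ‖t‖ * ‖D‖ ≤ (4 * C₁ / (a + j) ^ 2) * 2 := by
          apply mul_le_mul ht hDle (norm_nonneg _)
          positivity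
        have : (4 * C₁ / (a + j) ^ 2) * 2 = 8 * C₁ / (a + j) ^ 2 := by ring
        linarith
      have htel : 8 * C₁ / (a + j) ^ 2 ≤ 8 * C₁ * (1 / (a + j - 1) - 1 / (a + j)) := by
        have hj0 : (0:ℝ) ≤ (j:ℝ) := Nat.cast_nonneg j
        have h1 : (0:ℝ) < a + j - 1 := by linarith
        have h2 : (0:ℝ) < a + j := by linarith
        have hprod : (0:ℝ) < (a + j - 1) * (a + j) := mul_pos h1 h2
        have heq : 1 / (a + j - 1) - 1 / (a + j) = 1 / ((a + j - 1) * (a + j)) := by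
          field_simp
          ring
        rw [heq]
        have hle : (a + j - 1) * (a + j) ≤ (a + j) ^ 2 := by nlinarith [h2]
        have hdiv : 1 / (a + j) ^ 2 ≤ 1 / ((a + j - 1) * (a + j)) :=
          one_div_le_one_div_of_le hprod hle
        calc 8 * C₁ / (a + j) ^ 2 = 8 * C₁ * (1 / (a + j) ^ 2) := by ring
          _ ≤ 8 * C₁ * (1 / ((a + j - 1) * (a + j))) :=
              mul_le_mul_of_nonneg_left hdiv (by linarith)
      push_cast
      have hcast : a + ((j:ℝ) + 1) - 1 = a + j := by ring
      rw [hcast]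
      have hid : 8 * C₁ * (1 / (a - 1) - 1 / (a + j))
          = 8 * C₁ * (1 / (a + j - 1) - 1 / (a + j))
            + 8 * C₁ * (1 / (a - 1) - 1 / (a + j - 1)) := by ring
      linarith [hsplit, hstep, htel]
  -- conclusion
  have hj0 : (0:ℝ) < a + j - 1 := by
    have : (0:ℝ) ≤ (j:ℝ) := Nat.cast_nonneg j
    linarith
  have hBj : 8 * C₁ * (1 / (a - 1) - 1 / (a + j - 1)) ≤ 8 * C₁ / (a - 1) := by
    have h9 : (0:ℝ) ≤ 1 / (a + j - 1) := by positivity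
    have h8 : (0:ℝ) ≤ 8 * C₁ := by linarith
    have key2 : 8 * C₁ * (1 / (a - 1) - 1 / (a + j - 1))
        = 8 * C₁ / (a - 1) - 8 * C₁ * (1 / (a + j - 1)) := by ring
    rw [key2]
    have := mul_nonneg h8 h9
    linarith
  have := (key j).2
  linarith
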